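/- Let g be a positive odd integer, let G be a connected weighted graph with nonnegative edge weights whose girth is at least g, and let D be a DFS tree of G. Then mac(G) ≥ w(G)/2 + ((g−2)/(2(g−1)))·w(D). -/

import Mathlib

namespace MaxCut

/-- Weight of the cut induced by vertex set `A`: total weight of edges of `G`
with exactly one endpoint in `A`. -/
noncomputable def cutWeight {V : Type*} (G : SimpleGraph V) (w : Sym2 V → ℝ) (A : Set V) : ℝ :=
  ∑ᶠ e ∈ {e ∈ G.edgeSet | ∃ x y, e = s(x, y) ∧ x ∈ A ∧ y ∉ A}, w e

/-- Total weight of the edges of `G`. -/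
noncomputable def totalWeight {V : Type*} (G : SimpleGraph V) (w : Sym2 V → ℝ) : ℝ :=
  ∑ᶠ e ∈ G.edgeSet, w e

/-- Total weight of a set of edges. -/
noncomputable def setWeight {V : Type*} (w : Sym2 V → ℝ) (M : Set (Sym2 V)) : ℝ :=
  ∑ᶠ e ∈ M, w e

/-- `T` is a spanning tree of `G`. -/
def IsSpanningTree {V : Type*} (G T : SimpleGraph V) : Prop := T ≤ G ∧ T.IsTree

/-- `T` is a DFS tree of `G` rooted at `r`: a spanning tree such that every edge of `G`
joins an ancestor–descendant pair (here `x` is an ancestor of `y` in the tree `T` rooted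
at `r` iff `x` lies on the unique `r`–`y` path, equivalently
`T.dist r x + T.dist x y = T.dist r y`). -/
def IsDFSTree {V : Type*} (G T : SimpleGraph V) (r : V) : Prop :=
  T ≤ G ∧ T.IsTree ∧ ∀ x y, G.Adj x y →
    T.dist r x + T.dist x y = T.dist r y ∨ T.dist r y + T.dist y x = T.dist r x

/-- `M` is a matching of `G` (a set of pairwise non-adjacent edges of `G`). -/
def IsMatching {V : Type*} (G : SimpleGraph V) (M : Set (Sym2 V)) : Prop :=
  M ⊆ G.edgeSet ∧ ∀ e ∈ M, ∀ f ∈ M, e ≠ f → ∀ v, ¬(v ∈ e ∧ v ∈ f)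

/-- Every vertex of `G` has degree at most `d`. -/
def MaxDegreeLE {V : Type*} (G : SimpleGraph V) (d : ℕ) : Prop :=
  ∀ v : V, {u | G.Adj v u}.ncard ≤ d

open Finset in

lemma count_eps {B : ℕ} (b1 b2 : Fin B) (h : b1 ≠ b2) (F : Bool → Bool)
    (p : (Fin B → Bool) → Prop) [inst : DecidablePred p]
    (hp : ∀ ε, p ε ↔ ε b2 = F (ε b1)) :
    (Finset.univ.filter p).card = 2 ^ (B - 1) := by
  have h1 : Finset.univ.filter p
      = Finset.univ.filter (fun ε : Fin B → Bool => ε b2 = F (ε b1)) := by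
    ext ε; simp [hp]
  classical
  rw [h1, ← Fintype.card_subtype]
  have e : {ε : Fin B → Bool // ε b2 = F (ε b1)} ≃ ({i : Fin B // i ≠ b2} → Bool) :=
    { toFun := fun ε i => ε.1 i.1
      invFun := fun f =>
        ⟨fun i => if h2 : i = b2 then F (f ⟨b1, h⟩) else f ⟨i, h2⟩, by
          simp [dif_neg h]⟩
      left_inv := by
        rintro ⟨ε, hε⟩
        ext i
        by_cases h2 : i = b2
        · subst h2; simp [dif_neg h, hε]
        · simp [h2]
      right_inv := by
        intro f
        ext i
        simp [i.2] }
  have hcard : Fintype.card {i : Fin B // i ≠ b2} = B - 1 := by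
    simp [Fintype.card_subtype_compl]
  rw [Fintype.card_congr e, Fintype.card_fun, hcard, Fintype.card_bool]

lemma card_filter_mod {N : ℕ} (hN : 0 < N) (a : ℕ) :
    (Finset.univ.filter (fun t : Fin N => (a + t.1) % N = N - 1)).card = 1 := by
  have ham : a % N < N := Nat.mod_lt _ hN
  have key : ∀ X : ℕ, a % N + X = N - 1 + N → (a + X % N) % N = N - 1 := by
    intro X hX
    rw [Nat.add_mod_mod, Nat.add_mod a X N, Nat.add_mod_mod, hX, Nat.add_mod_right,
      Nat.mod_eq_of_lt (by omega)]
  rw [Finset.card_eq_one]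
  refine ⟨⟨(N - 1 + N - a % N) % N, Nat.mod_lt _ hN⟩, ?_⟩
  rw [Finset.eq_singleton_iff_unique_mem]
  constructor
  · simp only [Finset.mem_filter, Finset.mem_univ, true_and]
    exact key _ (by omega)
  · rintro ⟨t, ht⟩ hmem
    simp only [Finset.mem_filter, Finset.mem_univ, true_and] at hmem
    have h2 : (a + (N - 1 + N - a % N) % N) % N = N - 1 := key _ (by omega)
    have hmod : t ≡ (N - 1 + N - a % N) % N [MOD N] :=
      Nat.ModEq.add_left_cancel' a (hmem.trans h2.symm)
    exact Fin.ext (Nat.ModEq.eq_of_lt_of_lt hmod ht (Nat.mod_lt _ hN))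

lemma card_filter_prod {α β : Type*} [Fintype α] [Fintype β] (p : α × β → Prop)
    [DecidablePred p] :
    (Finset.univ.filter p).card = ∑ a : α, (Finset.univ.filter fun b => p (a, b)).card := by
  rw [Finset.card_filter, Fintype.sum_prod_type]
  exact Finset.sum_congr rfl fun a _ => (Finset.card_filter _ _).symm

lemma main_count {V : Type*} [Fintype V] (N M : ℕ) (hN : 0 < N) (d : V → ℕ)
    (hdM : ∀ v, d v ≤ M) :
    ∃ col : V → (Fin N × (Fin (M + 1) → Bool)) → Bool,
      (∀ x y : V, d y = d x + 1 →
        (Finset.univ.filter fun ω => col x ω ≠ col y ω).card = (2 * N - 1) * 2 ^ M) ∧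
      (∀ x y : V, d x + N ≤ d y →
        (Finset.univ.filter fun ω => col x ω ≠ col y ω).card = N * 2 ^ M) := by
  classical
  have hblk : ∀ (v : V) (t : Fin N), (d v + t.1) / N < M + 1 := by
    intro v t
    rw [Nat.div_lt_iff_lt_mul hN]
    have h1 := hdM v
    have h2 := t.2
    have h3 : M ≤ M * N := Nat.le_mul_of_pos_right M hN
    have h4 : (M + 1) * N = M * N + N := by ring
    omega
  set B := M + 1 with hB
  set blk : V → Fin N → Fin B := fun v t => ⟨(d v + t.1) / N, hblk v t⟩ with hblkdef
  set col : V → (Fin N × (Fin B → Bool)) → Bool :=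
    fun v ω => xor (decide ((d v + ω.1.1) % N % 2 = 0)) (ω.2 (blk v ω.1)) with hcol
  have diffblk : ∀ (x y : V) (t : Fin N), blk x t ≠ blk y t →
      (Finset.univ.filter fun ε : Fin B → Bool => col x (t, ε) ≠ col y (t, ε)).card
        = 2 ^ M := by
    intro x y t hne
    have hiff : ∀ ε : Fin B → Bool, (col x (t, ε) ≠ col y (t, ε)) ↔
        ε (blk y t) = (fun s => xor (decide ((d y + t.1) % N % 2 = 0))
          (!(xor (decide ((d x + t.1) % N % 2 = 0)) s))) (ε (blk x t)) := by
      intro ε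
      simp only [hcol]
      cases (ε (blk x t)) <;> cases (ε (blk y t)) <;>
        cases (decide ((d x + t.1) % N % 2 = 0)) <;>
        cases (decide ((d y + t.1) % N % 2 = 0)) <;> simp
    refine (count_eps (blk x t) (blk y t) hne
      (fun s => xor (decide ((d y + t.1) % N % 2 = 0))
        (!(xor (decide ((d x + t.1) % N % 2 = 0)) s))) _ hiff).trans ?_
    rw [hB]
    norm_num
  refine ⟨col, ?_, ?_⟩
  · -- tree edges
    intro x y hxy
    rw [card_filter_prod]
    have hsplit : ∀ t : Fin N,
        (Finset.univ.filter fun ε : Fin B → Bool => col x (t, ε) ≠ col y (t, ε)).card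
          = if (d x + t.1) % N = N - 1 then 2 ^ M else 2 ^ (M + 1) := by
      intro t
      set m := d x + t.1 with hm
      have hcomm : d y + t.1 = m + 1 := by omega
      by_cases hb : m % N = N - 1
      · rw [if_pos hb]
        apply diffblk
        have hdvd : N ∣ m + 1 := by
          refine ⟨m / N + 1, ?_⟩
          have h1 := Nat.div_add_mod m N
          have h2 : N * (m / N + 1) = N * (m / N) + N := by ring
          omega
        have hstep : (m + 1) / N = m / N + 1 := by
          rw [Nat.succ_div, if_pos hdvd]
        apply Fin.ne_of_val_ne
        show m / N ≠ (d y + t.1) / N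
        rw [hcomm, hstep]
        omega
      · rw [if_neg hb]
        have hmlt : m % N < N - 1 := by
          have := Nat.mod_lt m hN
          omega
        have hmod : (m + 1) % N = m % N + 1 := by
          conv_lhs => rw [Nat.add_mod]
          rw [Nat.mod_eq_of_lt (show (1:ℕ) < N by omega),
            Nat.mod_eq_of_lt (by omega)]
        have hdivq : (m + 1) / N = m / N := by
          rw [Nat.succ_div, if_neg, add_zero]
          rintro ⟨k, hk⟩
          have : (m + 1) % N = 0 := by rw [hk]; exact Nat.mul_mod_right N k
          omega
        have hblkeq : blk x t = blk y t := by
          apply Fin.ext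
          show m / N = (d y + t.1) / N
          rw [hcomm, hdivq]
        have hc : decide (m % N % 2 = 0) ≠ decide ((d y + t.1) % N % 2 = 0) := by
          rw [Ne, decide_eq_decide, hcomm, hmod]
          omega
        rw [Finset.filter_true_of_mem, Finset.card_univ]
        · simp [Fintype.card_fun, hB]
        · intro ε _
          simp only [hcol, ← hblkeq]
          revert hc
          generalize (decide (m % N % 2 = 0)) = c1
          generalize (decide ((d y + t.1) % N % 2 = 0)) = c2
          generalize (ε (blk x t)) = s
          cases c1 <;> cases c2 <;> cases s <;> simp
    calc ∑ t : Fin N,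
        (Finset.univ.filter fun ε : Fin B → Bool => col x (t, ε) ≠ col y (t, ε)).card
        = ∑ t : Fin N, if (d x + t.1) % N = N - 1 then 2 ^ M else 2 ^ (M + 1) := by
          exact Finset.sum_congr rfl fun t _ => hsplit t
      _ = (2 * N - 1) * 2 ^ M := by
          rw [Finset.sum_ite, Finset.sum_const, Finset.sum_const, card_filter_mod hN (d x)]
          have hcards := Finset.card_filter_add_card_filter_not
            (s := (Finset.univ : Finset (Fin N)))
            (p := fun t : Fin N => (d x + t.1) % N = N - 1)
          rw [card_filter_mod hN (d x), Finset.card_univ, Fintype.card_fin] at hcards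
          have hcard2 : (Finset.univ.filter
              fun t : Fin N => ¬((d x + t.1) % N = N - 1)).card = N - 1 := by omega
          rw [hcard2, smul_eq_mul, smul_eq_mul, one_mul, pow_succ]
          have h1 : 2 * N - 1 = 1 + (N - 1) * 2 := by omega
          rw [h1, add_mul, one_mul]
          ring
  · -- non-tree edges
    intro x y hxy
    rw [card_filter_prod]
    have hall : ∀ t : Fin N,
        (Finset.univ.filter fun ε : Fin B → Bool => col x (t, ε) ≠ col y (t, ε)).card
          = 2 ^ M := by
      intro t
      apply diffblk
      apply Fin.ne_of_val_ne
      show (d x + t.1) / N ≠ (d y + t.1) / N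
      have h1 := Nat.add_div_right (d x + t.1) hN
      have h2 : d x + t.1 + N ≤ d y + t.1 := by omega
      have h3 := Nat.div_le_div_right (c := N) h2
      omega
    rw [Finset.sum_congr rfl fun t _ => hall t, Finset.sum_const, Finset.card_univ,
      Fintype.card_fin, smul_eq_mul]

/-- If `g` is a positive odd integer, `G` has girth at least `g` and `D` is a
DFS tree of `G`, then `mac(G) ≥ w(G)/2 + ((g−2)/(2(g−1)))·w(D)`. -/
theorem maxcut_ge_of_girth_odd {V : Type*} [Fintype V] (g : ℕ) (hg : 0 < g) (hgo : Odd g)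
    (G D : SimpleGraph V) (r : V) (w : Sym2 V → ℝ) (hw : ∀ e, 0 ≤ w e)
    (hG : G.Connected) (hgirth : (g : ℕ∞) ≤ G.egirth) (hD : IsDFSTree G D r) :
    ∃ A : Set V,
      totalWeight G w / 2 + ((g : ℝ) - 2) / (2 * ((g : ℝ) - 1)) * totalWeight D w
        ≤ cutWeight G w A := by
  classical
  obtain ⟨hDG, hDtree, hdfs⟩ := hD
  have hDconn : D.Connected := hDtree.isConnected
  set N : ℕ := max 1 (g - 1) with hNdef
  have hN : 0 < N := Nat.lt_of_lt_of_le Nat.one_pos (le_max_left _ _)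
  have hNval1 : g = 1 → N = 1 := fun h => by rw [hNdef, h]; simp
  have hNval2 : 2 ≤ g → N = g - 1 := fun h => by
    rw [hNdef]; exact Nat.max_eq_right (by omega)
  set d : V → ℕ := fun v => D.dist r v with hd
  set M : ℕ := Finset.univ.sup d with hM
  have hdM : ∀ v, d v ≤ M := fun v => Finset.le_sup (Finset.mem_univ v)
  obtain ⟨col, Htree, Hnon⟩ := main_count N M hN d hdM
  set A : Fin N × (Fin (M + 1) → Bool) → Set V := fun ω => {v | col v ω = true} with hA
  -- orientation of edges
  have horient : ∀ a b : V, G.Adj a b → ∃ x y : V, s(a, b) = s(x, y) ∧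
      d y = d x + D.dist x y ∧ 1 ≤ D.dist x y := by
    intro a b hab
    have hne : a ≠ b := hab.ne
    rcases hdfs a b hab with h | h
    · refine ⟨a, b, rfl, ?_, ?_⟩
      · show D.dist r b = D.dist r a + D.dist a b; omega
      · have : D.dist a b ≠ 0 := fun h0 => hne (hDconn.dist_eq_zero_iff.mp h0)
        omega
    · refine ⟨b, a, Sym2.eq_swap, ?_, ?_⟩
      · show D.dist r a = D.dist r b + D.dist b a; omega
      · have : D.dist b a ≠ 0 := fun h0 => hne.symm (hDconn.dist_eq_zero_iff.mp h0)
        omega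
  -- girth bound for non-tree edges
  have hbig : ∀ x y : V, G.Adj x y → s(x, y) ∉ D.edgeSet → N ≤ D.dist x y := by
    intro x y hadj hnot
    have hd0 : D.dist x y ≠ 0 := fun h0 => hadj.ne (hDconn.dist_eq_zero_iff.mp h0)
    by_cases hg1 : g = 1
    · rw [hNval1 hg1]; omega
    · have hg2 : 2 ≤ g := by omega
      have hd1 : D.dist x y ≠ 1 := by
        intro h1
        exact hnot ((SimpleGraph.mem_edgeSet _).mpr (SimpleGraph.dist_eq_one_iff_adj.mp h1))
      obtain ⟨p, hp, hplen⟩ := hDconn.exists_path_of_dist x y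
      have hcyc : (SimpleGraph.Walk.cons hadj.symm (p.mapLe hDG)).IsCycle := by
        rw [SimpleGraph.Walk.cons_isCycle_iff]
        refine ⟨hp.mapLe hDG, fun hmem => ?_⟩
        have hmem' : s(y, x) ∈ p.edges := by
          simpa using hmem
        have hxyD : s(y, x) ∈ D.edgeSet := p.edges_subset_edgeSet hmem'
        rw [Sym2.eq_swap] at hxyD
        exact hnot hxyD
      have hge : (g : ℕ∞) ≤ ((SimpleGraph.Walk.cons hadj.symm (p.mapLe hDG)).length : ℕ∞) :=
        SimpleGraph.le_egirth.mp hgirth y _ hcyc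
      have hlen : (SimpleGraph.Walk.cons hadj.symm (p.mapLe hDG)).length = D.dist x y + 1 := by
        rw [SimpleGraph.Walk.length_cons]
        simp [hplen]
      rw [hlen] at hge
      have hgle : g ≤ D.dist x y + 1 := by exact_mod_cast hge
      rw [hNval2 hg2]; omega
  set P : Sym2 V → (Fin N × (Fin (M + 1) → Bool)) → Prop := fun e ω => ∃ x y, e = s(x, y) ∧ x ∈ A ω ∧ y ∉ A ω with hP
  have hPiff : ∀ (x y : V) (ω : Fin N × (Fin (M + 1) → Bool)), P s(x, y) ω ↔ col x ω ≠ col y ω := by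
    intro x y ω
    constructor
    · rintro ⟨a, b, hab, ha, hb⟩
      have ha' : col a ω = true := ha
      have hb' : ¬ col b ω = true := hb
      rcases Sym2.eq_iff.mp hab with ⟨rfl, rfl⟩ | ⟨rfl, rfl⟩
      · intro h; rw [ha'] at h; exact hb' h.symm
      · intro h; rw [ha'] at h; exact hb' h
    · intro hne
      by_cases hx : col x ω = true
      · refine ⟨x, y, rfl, hx, fun hy => hne (hx.trans (Eq.symm hy))⟩
      · refine ⟨y, x, Sym2.eq_swap.symm, ?_, hx⟩
        show col y ω = true
        cases hyv : col y ω
        · cases hxv : col x ω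
          · exact absurd (hxv.trans hyv.symm) hne
          · exact absurd hxv hx
        · rfl
  have hGfin : G.edgeSet.Finite := Set.toFinite _
  have hDfin : D.edgeSet.Finite := Set.toFinite _
  set SG := hGfin.toFinset with hSG
  set SD := hDfin.toFinset with hSD
  have hsub : SD ⊆ SG := by
    intro e he
    rw [Set.Finite.mem_toFinset] at *
    exact SimpleGraph.edgeSet_mono hDG he
  have hWG : totalWeight G w = ∑ e ∈ SG, w e := by
    rw [totalWeight, ← Set.Finite.coe_toFinset hGfin, finsum_mem_coe_finset]
  have hWD : totalWeight D w = ∑ e ∈ SD, w e := by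
    rw [totalWeight, ← Set.Finite.coe_toFinset hDfin, finsum_mem_coe_finset]
  have hcnt : ∀ e ∈ SG, (Finset.univ.filter fun ω : Fin N × (Fin (M + 1) → Bool) => P e ω).card
      = (if e ∈ SD then (2 * N - 1) else N) * 2 ^ M := by
    intro e
    induction e using Sym2.ind with
    | _ a b =>
      intro he
      rw [Set.Finite.mem_toFinset] at he
      have hadj : G.Adj a b := (SimpleGraph.mem_edgeSet _).mp he
      obtain ⟨x, y, hxy, hdy, hdist⟩ := horient a b hadj
      have hfe : (Finset.univ.filter fun ω : Fin N × (Fin (M + 1) → Bool) => P s(a, b) ω)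
          = Finset.univ.filter fun ω : Fin N × (Fin (M + 1) → Bool) => col x ω ≠ col y ω := by
        ext ω
        simp only [Finset.mem_filter, Finset.mem_univ, true_and]
        rw [hxy]
        exact hPiff x y ω
      rw [hfe]
      by_cases hmem : s(a, b) ∈ D.edgeSet
      · rw [if_pos (hDfin.mem_toFinset.mpr hmem)]
        have hDadj : D.Adj x y := (SimpleGraph.mem_edgeSet _).mp (hxy ▸ hmem)
        have h1 : D.dist x y = 1 := SimpleGraph.dist_eq_one_iff_adj.mpr hDadj
        exact Htree x y (by rw [hdy, h1])
      · rw [if_neg (fun hc => hmem (hDfin.mem_toFinset.mp hc))]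
        have hadjxy : G.Adj x y := (SimpleGraph.mem_edgeSet _).mp (hxy ▸ he)
        have hNle : N ≤ D.dist x y := hbig x y hadjxy (hxy ▸ hmem)
        exact Hnon x y (by omega)
  have hswap : ∑ ω : Fin N × (Fin (M + 1) → Bool), cutWeight G w (A ω)
      = ∑ e ∈ SG, ((Finset.univ.filter fun ω : Fin N × (Fin (M + 1) → Bool) => P e ω).card : ℝ) * w e := by
    have h1 : ∀ ω : Fin N × (Fin (M + 1) → Bool), cutWeight G w (A ω) = ∑ e ∈ SG.filter (fun e => P e ω), w e := by
      intro ω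
      rw [cutWeight, ← finsum_mem_coe_finset]
      congr 1
      ext e
      simp only [Finset.coe_filter, Set.mem_setOf_eq, Set.Finite.mem_toFinset, hSG, hP]
    calc ∑ ω : Fin N × (Fin (M + 1) → Bool), cutWeight G w (A ω)
        = ∑ ω : Fin N × (Fin (M + 1) → Bool), ∑ e ∈ SG, if P e ω then w e else 0 := by
          refine Finset.sum_congr rfl fun ω _ => ?_
          rw [h1 ω, Finset.sum_filter]
      _ = ∑ e ∈ SG, ∑ ω : Fin N × (Fin (M + 1) → Bool), if P e ω then w e else 0 := Finset.sum_comm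
      _ = ∑ e ∈ SG, ((Finset.univ.filter fun ω : Fin N × (Fin (M + 1) → Bool) => P e ω).card : ℝ) * w e := by
          refine Finset.sum_congr rfl fun e _ => ?_
          rw [← Finset.sum_filter, Finset.sum_const, nsmul_eq_mul]
  have hsplit : ∑ e ∈ SG, ((Finset.univ.filter fun ω : Fin N × (Fin (M + 1) → Bool) => P e ω).card : ℝ) * w e
      = ((N * 2 ^ M : ℕ) : ℝ) * (totalWeight G w - totalWeight D w)
        + (((2 * N - 1) * 2 ^ M : ℕ) : ℝ) * totalWeight D w := by
    have h2 : ∑ e ∈ SG, ((Finset.univ.filter fun ω : Fin N × (Fin (M + 1) → Bool) => P e ω).card : ℝ) * w e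
        = ∑ e ∈ SG, (((if e ∈ SD then (2 * N - 1) else N) * 2 ^ M : ℕ) : ℝ) * w e :=
      Finset.sum_congr rfl fun e he => by rw [hcnt e he]
    rw [h2, ← Finset.sum_sdiff hsub]
    have h3 : ∑ e ∈ SG \ SD, (((if e ∈ SD then (2 * N - 1) else N) * 2 ^ M : ℕ) : ℝ) * w e
        = ((N * 2 ^ M : ℕ) : ℝ) * ∑ e ∈ SG \ SD, w e := by
      rw [Finset.mul_sum]
      refine Finset.sum_congr rfl fun e he => ?_
      rw [if_neg (Finset.mem_sdiff.mp he).2]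
    have h4 : ∑ e ∈ SD, (((if e ∈ SD then (2 * N - 1) else N) * 2 ^ M : ℕ) : ℝ) * w e
        = (((2 * N - 1) * 2 ^ M : ℕ) : ℝ) * ∑ e ∈ SD, w e := by
      rw [Finset.mul_sum]
      refine Finset.sum_congr rfl fun e he => ?_
      rw [if_pos he]
    have h5 : ∑ e ∈ SG \ SD, w e = totalWeight G w - totalWeight D w := by
      have := Finset.sum_sdiff hsub (f := w)
      rw [hWG, hWD]
      linarith
    rw [h3, h4, h5, ← hWD]
  have hOmegacard : Fintype.card (Fin N × (Fin (M + 1) → Bool)) = N * 2 ^ (M + 1) := by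
    simp [Fintype.card_fun]
  have hNonempty : Nonempty (Fin N × (Fin (M + 1) → Bool)) := ⟨⟨⟨0, hN⟩, fun _ => false⟩⟩
  have hcoef : ((g : ℝ) - 2) / (2 * ((g : ℝ) - 1)) * (2 * (N : ℝ)) = (N : ℝ) - 1 := by
    by_cases hg1 : g = 1
    · rw [hNval1 hg1, hg1]
      norm_num
    · have hg2 : 2 ≤ g := by omega
      have hcast : (N : ℝ) = (g : ℝ) - 1 := by
        rw [hNval2 hg2, Nat.cast_sub (by omega : 1 ≤ g)]
        norm_num
      have hgR : (2 : ℝ) ≤ (g : ℝ) := by exact_mod_cast hg2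
      have hne0 : 2 * ((g : ℝ) - 1) ≠ 0 := by intro h; nlinarith
      rw [hcast]
      have hne1 : (g : ℝ) - 1 ≠ 0 := by linarith
      field_simp
      ring
  have hkey : ∑ _ω : Fin N × (Fin (M + 1) → Bool), (totalWeight G w / 2
        + ((g : ℝ) - 2) / (2 * ((g : ℝ) - 1)) * totalWeight D w)
      ≤ ∑ ω : Fin N × (Fin (M + 1) → Bool), cutWeight G w (A ω) := by
    rw [hswap, hsplit, Finset.sum_const, Finset.card_univ, hOmegacard, nsmul_eq_mul]
    have hc1 : ((N * 2 ^ (M + 1) : ℕ) : ℝ) = (N : ℝ) * 2 * 2 ^ M := by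
      push_cast [pow_succ]
      ring
    have hc2 : ((N * 2 ^ M : ℕ) : ℝ) = (N : ℝ) * 2 ^ M := by push_cast; ring
    have hc3 : (((2 * N - 1) * 2 ^ M : ℕ) : ℝ) = (2 * (N : ℝ) - 1) * 2 ^ M := by
      push_cast [Nat.cast_sub (by omega : 1 ≤ 2 * N)]
      ring
    rw [hc1, hc2, hc3]
    apply le_of_eq
    linear_combination ((2:ℝ) ^ M * totalWeight D w) * hcoef
  obtain ⟨ω, _, hle⟩ := Finset.exists_le_of_sum_le Finset.univ_nonempty hkey
  exact ⟨A ω, hle⟩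


end MaxCut
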